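/- Let a < b be integers and let w : {a,a+1,…,b} → ℝ_{>0} be a weight function even about the midpoint m = (a+b)/2, i.e. w(m+t) = w(m−t) whenever m±t ∈ {a,…,b}. Let (p_n)_{n≥0} be the monic orthogonal polynomials satisfying ∑_{x=a}^{b} w(x) p_j(x) p_k(x) = (p_j,p_j) δ_{j,k}. Then for every n ≥ 1, ∑_{x_1=a}^{b} ⋯ ∑_{x_n=a}^{b} w(x_1)⋯w(x_n) · (∏_{1≤i<j≤n} ((x_i−m)^2 − (x_j−m)^2))^2 · ∏_{i=1}^{n} (x_i − m)^2 = n! · ∏_{j=0}^{n−1} (p_{2j+1}, p_{2j+1}). -/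

import Mathlib

open Finset

open Polynomial

lemma my_orth_all (a b : ℤ) (w : ℤ → ℝ) (P : ℕ → Polynomial ℝ)
    (hm : ∀ k, (P k).Monic) (hd : ∀ k, (P k).natDegree = k)
    (ho : ∀ j k, j ≠ k → ∑ x ∈ Finset.Icc a b, w x * (P j).eval (x:ℝ) * (P k).eval (x:ℝ) = 0)
    (k : ℕ) : ∀ (q : Polynomial ℝ), q.natDegree < k →
      ∑ x ∈ Finset.Icc a b, w x * q.eval (x:ℝ) * (P k).eval (x:ℝ) = 0 := by
  suffices H : ∀ d : ℕ, ∀ q : Polynomial ℝ, q.natDegree ≤ d → q.natDegree < k →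
      ∑ x ∈ Finset.Icc a b, w x * q.eval (x:ℝ) * (P k).eval (x:ℝ) = 0 by
    intro q hq; exact H q.natDegree q le_rfl hq
  intro d
  induction d with
  | zero =>
    intro q hq0 hqk
    have hq : q = C (q.coeff 0) := (Polynomial.eq_C_of_natDegree_le_zero hq0)
    have h0 : (P 0) = 1 := (hm 0).natDegree_eq_zero.mp (hd 0)
    have := ho 0 k (by omega)
    rw [h0] at this
    simp only [Polynomial.eval_one, mul_one] at this
    calc ∑ x ∈ Finset.Icc a b, w x * q.eval (x:ℝ) * (P k).eval (x:ℝ)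
        = q.coeff 0 * ∑ x ∈ Finset.Icc a b, w x * 1 * (P k).eval (x:ℝ) := by
          rw [Finset.mul_sum]; apply Finset.sum_congr rfl; intro x _
          rw [hq]; simp; ring
      _ = 0 := by simp only [mul_one] at this ⊢; rw [this]; ring
  | succ d IH =>
    intro q hq0 hqk
    by_cases hle : q.natDegree ≤ d
    · exact IH q hle hqk
    have hdq : q.natDegree = d + 1 := by omega
    have hq0' : q ≠ 0 := by intro h; rw [h] at hdq; simp at hdq
    set r := q - C q.leadingCoeff * P (d+1) with hr
    have hdegr : r.degree < q.degree := by
      apply Polynomial.degree_sub_lt _ hq0'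
      · rw [Polynomial.leadingCoeff_mul, Polynomial.leadingCoeff_C, (hm (d+1)).leadingCoeff, mul_one]
      · rw [Polynomial.degree_C_mul (by
          intro h; exact hq0' (Polynomial.leadingCoeff_eq_zero.mp h))]
        rw [Polynomial.degree_eq_natDegree hq0', Polynomial.degree_eq_natDegree (hm (d+1)).ne_zero,
          hdq, hd (d+1)]
    have hrd : r.natDegree ≤ d := by
      by_cases hr0 : r = 0
      · simp [hr0]
      · have := Polynomial.natDegree_lt_natDegree hr0 hdegr
        omega
    have hsplit : ∀ x : ℝ, q.eval x = q.leadingCoeff * (P (d+1)).eval x + r.eval x := by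
      intro x; rw [hr]; simp; try ring
    calc ∑ x ∈ Finset.Icc a b, w x * q.eval (x:ℝ) * (P k).eval (x:ℝ)
        = q.leadingCoeff * ∑ x ∈ Finset.Icc a b, w x * (P (d+1)).eval (x:ℝ) * (P k).eval (x:ℝ)
          + ∑ x ∈ Finset.Icc a b, w x * r.eval (x:ℝ) * (P k).eval (x:ℝ) := by
          rw [Finset.mul_sum, ← Finset.sum_add_distrib]
          apply Finset.sum_congr rfl; intro x _
          rw [hsplit]; ring
      _ = 0 := by
          rw [ho (d+1) k (by omega), IH r hrd (by omega)]; ring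

lemma my_sum_reflect (a b : ℤ) (f : ℤ → ℝ) :
    ∑ x ∈ Finset.Icc a b, f x = ∑ x ∈ Finset.Icc a b, f (a + b - x) := by
  apply Finset.sum_nbij' (i := fun x => a + b - x) (j := fun x => a + b - x)
  · intro x hx; simp only [Finset.mem_Icc] at *; omega
  · intro x hx; simp only [Finset.mem_Icc] at *; omega
  · intro x hx; omega
  · intro x hx; omega
  · intro x hx; congr 1; omega

lemma my_coeff_comp_neg_X (s : Polynomial ℝ) (n : ℕ) :
    (s.comp (-X)).coeff n = (-1)^n * s.coeff n := by
  induction s using Polynomial.induction_on' with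
  | add p q hp hq => simp [Polynomial.add_comp, hp, hq, mul_add]
  | monomial k c =>
    rw [← Polynomial.C_mul_X_pow_eq_monomial, Polynomial.mul_comp, Polynomial.C_comp,
      Polynomial.pow_comp, Polynomial.X_comp]
    rw [neg_pow, show ((-1 : Polynomial ℝ)^k) = C ((-1:ℝ)^k) by rw [map_pow, map_neg, map_one]]
    rw [← mul_assoc, mul_comm (C c) (C ((-1:ℝ)^k)), mul_assoc]
    rw [Polynomial.coeff_C_mul, Polynomial.coeff_C_mul, Polynomial.coeff_X_pow]
    by_cases h : n = k
    · subst h; simp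
    · simp [h]

lemma my_sum_range_pair (f : ℕ → ℝ) (j : ℕ) :
    ∑ n ∈ Finset.range (2*j+2), f n = ∑ l ∈ Finset.range (j+1), (f (2*l) + f (2*l+1)) := by
  induction j with
  | zero => simp [Finset.sum_range_succ]
  | succ j IH =>
    have h1 : 2*(j+1)+2 = (2*j+2) + 1 + 1 := by omega
    rw [h1, Finset.sum_range_succ, Finset.sum_range_succ, IH,
      Finset.sum_range_succ _ (j+1), Finset.sum_range_succ _ j]
    simp only [show 2*(j+1)=2*j+2 from by omega, show 2*(j+1)+1=2*j+3 from by omega]; ring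

lemma my_exists_odd_part (m : ℝ) (P : Polynomial ℝ) (j : ℕ) (hP : P.Monic)
    (hPd : P.natDegree = 2*j+1)
    (hodd : ∀ y : ℝ, P.eval (m - y) = - P.eval (m + y)) :
    ∃ r : Polynomial ℝ, r.Monic ∧ r.natDegree = j ∧
      ∀ x : ℝ, P.eval x = (x - m) * r.eval ((x - m)^2) := by
  set s : Polynomial ℝ := P.comp (C m + X) with hs
  have hinner : (C m + X : Polynomial ℝ).natDegree = 1 := by
    rw [add_comm]; exact Polynomial.natDegree_X_add_C m
  have hsd : s.natDegree = 2*j+1 := by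
    rw [hs, Polynomial.natDegree_comp, hinner, hPd, mul_one]
  have hse : ∀ y : ℝ, s.eval y = P.eval (m + y) := by
    intro y; rw [hs]; simp [Polynomial.eval_comp]
  have hsmonic : s.leadingCoeff = 1 := by
    rw [hs, Polynomial.leadingCoeff_comp (by rw [hinner]; norm_num), hP.leadingCoeff]
    have : (C m + X : Polynomial ℝ).leadingCoeff = 1 := by
      rw [add_comm]; exact (Polynomial.monic_X_add_C m).leadingCoeff
    rw [this]; norm_num
  have hcomp : s.comp (-X) = -s := by
    apply Polynomial.funext
    intro y
    rw [Polynomial.eval_comp]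
    simp only [Polynomial.eval_neg, Polynomial.eval_X]
    rw [hse, hse, ← hodd y]
    try congr 1
    try ring
  have heven0 : ∀ l : ℕ, s.coeff (2*l) = 0 := by
    intro l
    have h1 : (s.comp (-X)).coeff (2*l) = (-1)^(2*l) * s.coeff (2*l) := my_coeff_comp_neg_X s _
    rw [hcomp] at h1
    simp only [Polynomial.coeff_neg, pow_mul, neg_one_sq, one_pow, one_mul] at h1
    linarith
  set r : Polynomial ℝ := ∑ l ∈ Finset.range (j+1), C (s.coeff (2*l+1)) * X^l with hrdef
  have hrcoeff : ∀ l' : ℕ, r.coeff l' = if l' ≤ j then s.coeff (2*l'+1) else 0 := by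
    intro l'
    rw [hrdef, Polynomial.finset_sum_coeff]
    simp only [Polynomial.coeff_C_mul, Polynomial.coeff_X_pow]
    rw [Finset.sum_congr rfl (g := fun l => if l' = l then s.coeff (2*l+1) else 0)
      (fun l _ => by split <;> simp_all)]
    rw [Finset.sum_ite_eq (Finset.range (j+1)) l' (fun l => s.coeff (2*l+1))]
    simp [Nat.lt_succ_iff]
  have hrj : r.coeff j = 1 := by
    rw [hrcoeff]; simp only [le_refl, if_true]
    have : 2*j+1 = s.natDegree := hsd.symm
    rw [this]; exact hsmonic
  have hrd : r.natDegree = j := by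
    apply le_antisymm
    · apply Polynomial.natDegree_le_iff_coeff_eq_zero.mpr
      intro n hn; rw [hrcoeff, if_neg (by omega)]
    · exact Polynomial.le_natDegree_of_ne_zero (by rw [hrj]; norm_num)
  have hrmonic : r.Monic := by
    unfold Polynomial.Monic Polynomial.leadingCoeff
    rw [hrd, hrj]
  refine ⟨r, hrmonic, hrd, ?_⟩
  intro x
  have h1 : P.eval x = s.eval (x - m) := by rw [hse]; congr 1; ring
  rw [h1]
  rw [Polynomial.eval_eq_sum_range' (n := 2*j+2) (by omega)]
  rw [my_sum_range_pair]
  have hre : r.eval ((x-m)^2) = ∑ l ∈ Finset.range (j+1), s.coeff (2*l+1) * ((x-m)^2)^l := by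
    rw [hrdef, Polynomial.eval_finset_sum]
    apply Finset.sum_congr rfl; intro l _; simp
  rw [hre, Finset.mul_sum]
  apply Finset.sum_congr rfl
  intro l _
  rw [heven0 l, ← pow_mul, pow_succ]
  ring

lemma my_reflect_eval (a b : ℤ) (hab : a < b) (w : ℤ → ℝ)
    (hpos : ∀ x ∈ Finset.Icc a b, 0 < w x)
    (heven : ∀ x ∈ Finset.Icc a b, w x = w (a + b - x))
    (p : ℕ → Polynomial ℝ)
    (hmonic : ∀ k, (p k).Monic)
    (hdeg : ∀ k, (p k).natDegree = k)
    (horth : ∀ j k, j ≠ k →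
      ∑ x ∈ Finset.Icc a b, w x * (p j).eval (x : ℝ) * (p k).eval (x : ℝ) = 0)
    (k : ℕ) (hk : (k:ℤ) ≤ b - a) :
    ∀ y : ℝ, (p k).eval ((a:ℝ) + (b:ℝ) - y) = (-1)^k * (p k).eval y := by
  -- the reflected family
  set Q : ℕ → Polynomial ℝ := fun j => C ((-1:ℝ)^j) * (p j).comp (C ((a:ℝ)+(b:ℝ)) - X) with hQ
  have hinner : (C ((a:ℝ)+(b:ℝ)) - X : Polynomial ℝ).natDegree = 1 := by
    rw [show (C ((a:ℝ)+(b:ℝ)) - X : Polynomial ℝ) = -(X - C ((a:ℝ)+(b:ℝ))) by ring]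
    rw [Polynomial.natDegree_neg]
    exact Polynomial.natDegree_X_sub_C _
  have hinnerlc : (C ((a:ℝ)+(b:ℝ)) - X : Polynomial ℝ).leadingCoeff = -1 := by
    rw [show (C ((a:ℝ)+(b:ℝ)) - X : Polynomial ℝ) = -(X - C ((a:ℝ)+(b:ℝ))) by ring]
    rw [Polynomial.leadingCoeff_neg, (Polynomial.monic_X_sub_C _).leadingCoeff]
  have hQeval : ∀ j, ∀ y : ℝ, (Q j).eval y = (-1:ℝ)^j * (p j).eval ((a:ℝ)+(b:ℝ)-y) := by
    intro j y; rw [hQ]; simp [Polynomial.eval_comp]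
  have hQdeg : ∀ j, (Q j).natDegree = j := by
    intro j
    rw [hQ]
    simp only
    rw [Polynomial.natDegree_C_mul (by positivity)]
    rw [Polynomial.natDegree_comp, hinner, hdeg, mul_one]
  have hQmonic : ∀ j, (Q j).Monic := by
    intro j
    unfold Polynomial.Monic
    rw [hQ]
    simp only
    rw [Polynomial.leadingCoeff_mul, Polynomial.leadingCoeff_C,
      Polynomial.leadingCoeff_comp (by rw [hinner]; norm_num), (hmonic j).leadingCoeff,
      hinnerlc, hdeg, one_mul, ← mul_pow]
    norm_num
  have hQorth : ∀ j l, j ≠ l →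
      ∑ x ∈ Finset.Icc a b, w x * (Q j).eval (x:ℝ) * (Q l).eval (x:ℝ) = 0 := by
    intro j l hjl
    have step1 : ∀ x ∈ Finset.Icc a b,
        w x * (Q j).eval (x:ℝ) * (Q l).eval (x:ℝ)
        = (-1:ℝ)^j * (-1:ℝ)^l *
          (w (a+b-x) * (p j).eval (((a+b-x : ℤ)):ℝ) * (p l).eval (((a+b-x : ℤ)):ℝ)) := by
      intro x hx
      rw [hQeval, hQeval, ← heven x hx]
      push_cast
      ring
    rw [Finset.sum_congr rfl step1, ← Finset.mul_sum]
    rw [← my_sum_reflect a b (fun t => w t * (p j).eval (t:ℝ) * (p l).eval (t:ℝ))]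
    rw [horth j l hjl, mul_zero]
  -- p k = Q k
  have hpQ : p k = Q k := by
    by_cases hd0 : p k - Q k = 0
    · linear_combination (norm := module) hd0
    have hdlt : (p k - Q k).natDegree < k := by
      have h1 : (p k - Q k).degree < (p k).degree := by
        apply Polynomial.degree_sub_lt _ (hmonic k).ne_zero
        · rw [(hmonic k).leadingCoeff, (hQmonic k).leadingCoeff]
        · rw [Polynomial.degree_eq_natDegree (hmonic k).ne_zero,
            Polynomial.degree_eq_natDegree (hQmonic k).ne_zero, hdeg, hQdeg]
      have := Polynomial.natDegree_lt_natDegree hd0 h1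
      rwa [hdeg] at this
    have hz1 : ∑ x ∈ Finset.Icc a b, w x * (p k - Q k).eval (x:ℝ) * (p k).eval (x:ℝ) = 0 :=
      my_orth_all a b w p hmonic hdeg horth k _ hdlt
    have hz2 : ∑ x ∈ Finset.Icc a b, w x * (p k - Q k).eval (x:ℝ) * (Q k).eval (x:ℝ) = 0 :=
      my_orth_all a b w Q hQmonic hQdeg hQorth k _ hdlt
    have hz : ∑ x ∈ Finset.Icc a b, w x * ((p k - Q k).eval (x:ℝ))^2 = 0 := by
      have heq : ∑ x ∈ Finset.Icc a b, w x * ((p k - Q k).eval (x:ℝ))^2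
          = (∑ x ∈ Finset.Icc a b, w x * (p k - Q k).eval (x:ℝ) * (p k).eval (x:ℝ))
            - ∑ x ∈ Finset.Icc a b, w x * (p k - Q k).eval (x:ℝ) * (Q k).eval (x:ℝ) := by
        rw [← Finset.sum_sub_distrib]
        apply Finset.sum_congr rfl
        intro x _
        simp only [Polynomial.eval_sub]
        ring
      rw [heq, hz1, hz2, sub_zero]
    have hvanish : ∀ x ∈ Finset.Icc a b, (p k - Q k).eval (x:ℝ) = 0 := by
      intro x hx
      have hnn : ∀ t ∈ Finset.Icc a b, 0 ≤ w t * ((p k - Q k).eval (t:ℝ))^2 := by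
        intro t ht; have := hpos t ht; positivity
      have := (Finset.sum_eq_zero_iff_of_nonneg hnn).mp hz x hx
      have hw := hpos x hx
      have h2 := (mul_eq_zero.mp this).resolve_left (ne_of_gt hw)
      exact pow_eq_zero_iff two_ne_zero |>.mp h2
    -- too many roots
    exfalso
    apply hd0
    apply Polynomial.eq_zero_of_natDegree_lt_card_of_eval_eq_zero' (p k - Q k)
      ((Finset.Icc a b).image (fun t : ℤ => (t:ℝ)))
    · intro y hy
      simp only [Finset.mem_image] at hy
      obtain ⟨t, ht, rfl⟩ := hy
      exact hvanish t ht
    · rw [Finset.card_image_of_injective _ Int.cast_injective, Int.card_Icc]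
      omega
  intro y
  have h := hQeval k ((a:ℝ)+(b:ℝ)-y)
  rw [← hpQ, show (a:ℝ)+(b:ℝ) - ((a:ℝ)+(b:ℝ)-y) = y by ring] at h
  exact h

lemma my_sq_antisym (n : ℕ) (v : Fin n → ℝ) :
    (∏ i : Fin n, ∏ j : Fin n, if i < j then v i - v j else 1)^2
      = (∏ i : Fin n, ∏ j ∈ Finset.Ioi i, (v j - v i))^2 := by
  have hIoi : ∀ i : Fin n, ∏ j ∈ Finset.Ioi i, (v j - v i)
      = ∏ j : Fin n, if i < j then v j - v i else 1 := by
    intro i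
    rw [← Finset.prod_filter]
    congr 1
    ext j
    simp [Finset.mem_Ioi]
  simp only [hIoi]
  have key : (∏ i : Fin n, ∏ j : Fin n, if i < j then v i - v j else 1)
      = (∏ i : Fin n, ∏ j : Fin n, if i < j then (-1:ℝ) else 1) *
        (∏ i : Fin n, ∏ j : Fin n, if i < j then v j - v i else 1) := by
    rw [← Finset.prod_mul_distrib]
    apply Finset.prod_congr rfl
    intro i _
    rw [← Finset.prod_mul_distrib]
    apply Finset.prod_congr rfl
    intro j _
    split <;> ring
  rw [key, mul_pow]
  have hsq : (∏ i : Fin n, ∏ j : Fin n, if i < j then (-1:ℝ) else 1)^2 = 1 := by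
    rw [← Finset.prod_pow]
    apply Finset.prod_eq_one
    intro i _
    rw [← Finset.prod_pow]
    apply Finset.prod_eq_one
    intro j _
    split <;> norm_num
  rw [hsq, one_mul]

lemma my_norm_zero (a b : ℤ) (w : ℤ → ℝ) (p : ℕ → Polynomial ℝ)
    (hmonic : ∀ k, (p k).Monic) (hdeg : ∀ k, (p k).natDegree = k)
    (horth : ∀ j k, j ≠ k →
      ∑ x ∈ Finset.Icc a b, w x * (p j).eval (x : ℝ) * (p k).eval (x : ℝ) = 0)
    (K : ℕ) (hK : (b + 1 - a).toNat ≤ K) (hK1 : 1 ≤ K) :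
    ∑ t ∈ Finset.Icc a b, w t * (p K).eval (t : ℝ) ^ 2 = 0 := by
  set q := Lagrange.interpolate (Finset.Icc a b) (fun t : ℤ => (t:ℝ))
    (fun t => (p K).eval (t:ℝ)) with hq
  have hinj : Set.InjOn (fun t : ℤ => (t:ℝ)) (Finset.Icc a b) :=
    fun s _ t _ h => by simpa using h
  have hqd : q.natDegree < K := by
    by_cases h0 : q = 0
    · rw [h0]; simpa using (show 0 < K by omega)
    · have h1 : q.degree < (#(Finset.Icc a b) : ℕ) :=
        Lagrange.degree_interpolate_lt _ hinj
      have h2 : q.natDegree < #(Finset.Icc a b) :=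
        (Polynomial.natDegree_lt_iff_degree_lt h0).mpr h1
      rw [Int.card_Icc] at h2
      omega
  have horthq := my_orth_all a b w p hmonic hdeg horth K q hqd
  rw [← horthq]
  apply Finset.sum_congr rfl
  intro t ht
  have hnode : q.eval ((t:ℤ):ℝ) = (p K).eval (t:ℝ) := by
    rw [hq]
    exact Lagrange.eval_interpolate_at_node _ hinj ht
  rw [hnode]
  ring

lemma my_pigeon (a b : ℤ) (n : ℕ) (hn : 1 ≤ n) (hcase : b - a ≤ 2*(n:ℤ) - 2)
    (t : Fin n → ℤ) (hmem : ∀ i, t i ∈ Finset.Icc a b)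
    (hne : ∀ i, 2 * t i ≠ a + b)
    (hinj : ∀ i j : Fin n, i ≠ j → (2*t i - a - b)^2 ≠ (2*t j - a - b)^2) : False := by
  set F : Finset ℤ := (Finset.Icc a b).filter (fun s => a + b < 2*s) with hF
  set T : Finset ℤ := F.image (fun s => (2*s - a - b)^2) with hT
  -- each z i lands in T
  have hz_mem : ∀ i, (2*t i - a - b)^2 ∈ T := by
    intro i
    have hti := hmem i
    simp only [Finset.mem_Icc] at hti
    rcases lt_or_gt_of_ne (hne i) with h | h
    · -- 2 t i < a + b : use reflected point
      refine Finset.mem_image.mpr ⟨a + b - t i, ?_, by ring⟩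
      simp only [hF, Finset.mem_filter, Finset.mem_Icc]
      omega
    · refine Finset.mem_image.mpr ⟨t i, ?_, rfl⟩
      simp only [hF, Finset.mem_filter, Finset.mem_Icc]
      omega
  have hcard1 : n ≤ T.card := by
    have := Finset.card_le_card_of_injOn (s := (Finset.univ : Finset (Fin n))) (fun i => (2*t i - a - b)^2)
      (fun i _ => hz_mem i) (fun i _ j _ h => by
        by_contra hij
        exact hinj i j hij h)
    simpa using this
  -- F injects into Icc a b \ F via reflection
  have hFsub : F ⊆ Finset.Icc a b := Finset.filter_subset _ _
  have hcard2 : F.card ≤ ((Finset.Icc a b) \ F).card := by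
    apply Finset.card_le_card_of_injOn (fun s => a + b - s)
    · intro s hs
      simp only [Finset.mem_coe, hF, Finset.mem_filter, Finset.mem_Icc] at hs
      simp only [Finset.mem_coe, Finset.mem_sdiff, hF, Finset.mem_filter, Finset.mem_Icc]
      omega
    · intro s _ s' _ h
      dsimp only at h
      omega
  have hcard3 : ((Finset.Icc a b) \ F).card = (Finset.Icc a b).card - F.card :=
    Finset.card_sdiff_of_subset hFsub
  have hIcc : (Finset.Icc a b).card = (b + 1 - a).toNat := Int.card_Icc a b
  have hcard4 : T.card ≤ F.card := Finset.card_image_le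
  have hFle : F.card ≤ (Finset.Icc a b).card := Finset.card_le_card hFsub
  omega

/-- Let `a < b` be integers and `w` a positive weight on
`{a,…,b}`, even about the midpoint `m = (a+b)/2` (i.e. `w x = w (a+b-x)`).
Let `(p_k)` be the monic orthogonal polynomials for `w`.  Then for `n ≥ 1`,
`∑_{x₁,…,x_n=a}^{b} w(x₁)⋯w(x_n) (∏_{i<j}((x_i-m)² - (x_j-m)²))² ∏_i (x_i-m)²
  = n! ∏_{j=0}^{n-1} (p_{2j+1}, p_{2j+1})`,
where `(p_j, p_j) = ∑_{x=a}^b w(x) p_j(x)²`. -/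
theorem stmt_15 (a b : ℤ) (hab : a < b) (w : ℤ → ℝ)
    (hpos : ∀ x ∈ Finset.Icc a b, 0 < w x)
    (heven : ∀ x ∈ Finset.Icc a b, w x = w (a + b - x))
    (p : ℕ → Polynomial ℝ)
    (hmonic : ∀ k, (p k).Monic)
    (hdeg : ∀ k, (p k).natDegree = k)
    (horth : ∀ j k, j ≠ k →
      ∑ x ∈ Finset.Icc a b, w x * (p j).eval (x : ℝ) * (p k).eval (x : ℝ) = 0)
    (n : ℕ) (hn : 1 ≤ n) :
    ∑ x : Fin n → {t : ℤ // t ∈ Finset.Icc a b},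
      (∏ i, w (x i)) *
        (∏ i : Fin n, ∏ j : Fin n, if i < j then
          (((x i : ℤ) : ℝ) - ((a : ℝ) + (b : ℝ)) / 2) ^ 2 -
            (((x j : ℤ) : ℝ) - ((a : ℝ) + (b : ℝ)) / 2) ^ 2 else 1) ^ 2 *
        (∏ i : Fin n, (((x i : ℤ) : ℝ) - ((a : ℝ) + (b : ℝ)) / 2) ^ 2)
    = (Nat.factorial n : ℝ) *
        ∏ j ∈ Finset.range n,
          ∑ t ∈ Finset.Icc a b, w t * (p (2 * j + 1)).eval (t : ℝ) ^ 2 := by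
  classical
  set m : ℝ := ((a : ℝ) + (b : ℝ)) / 2 with hmdef
  by_cases hcase : 2*(n:ℤ) - 1 ≤ b - a
  · -- nondegenerate case
    have hoddk : ∀ j : Fin n, ∀ y : ℝ,
        (p (2*(j:ℕ)+1)).eval (m - y) = - (p (2*(j:ℕ)+1)).eval (m + y) := by
      intro j y
      have hk : ((2*(j:ℕ)+1 : ℕ):ℤ) ≤ b - a := by
        have := j.isLt; push_cast; omega
      have h := my_reflect_eval a b hab w hpos heven p hmonic hdeg horth _ hk (m + y)
      rw [show (a:ℝ) + (b:ℝ) - (m + y) = m - y by rw [hmdef]; ring] at h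
      rw [h, pow_succ, pow_mul]
      norm_num
    have hparts : ∀ j : Fin n, ∃ r : Polynomial ℝ, r.Monic ∧ r.natDegree = (j:ℕ) ∧
        ∀ x : ℝ, (p (2*(j:ℕ)+1)).eval x = (x - m) * r.eval ((x - m)^2) :=
      fun j => my_exists_odd_part m _ (j:ℕ) (hmonic _) (hdeg _) (hoddk j)
    choose r hrm hrd hre using hparts
    set G : ℕ → ℕ → ℝ := fun j k => ∑ s ∈ Finset.Icc a b,
      w s * (p (2*j+1)).eval (s:ℝ) * (p (2*k+1)).eval (s:ℝ) with hG
    have hGoff : ∀ j k : ℕ, j ≠ k → G j k = 0 := fun j k h => horth _ _ (by omega)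
    set M : (Fin n → {t : ℤ // t ∈ Finset.Icc a b}) → Matrix (Fin n) (Fin n) ℝ :=
      fun x => Matrix.of (fun i jj : Fin n => (p (2*(jj:ℕ)+1)).eval (((x i : ℤ)):ℝ)) with hM
    have hdet2 : ∀ x : Fin n → {t : ℤ // t ∈ Finset.Icc a b}, (M x).det ^ 2
        = (∏ i : Fin n, ∏ j : Fin n, if i < j then
            (((x i : ℤ):ℝ) - m)^2 - (((x j : ℤ):ℝ) - m)^2 else 1)^2
          * ∏ i : Fin n, (((x i : ℤ):ℝ) - m)^2 := by
      intro x
      set u : Fin n → ℝ := fun i => (((x i : ℤ):ℝ) - m)^2 with hu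
      have h1 : M x = Matrix.of (fun i jj : Fin n => ((((x i : ℤ):ℝ) - m)) *
          (Matrix.of fun i' jj' : Fin n => (r jj').eval (u i')) i jj) := by
        ext i jj
        simp only [hM, Matrix.of_apply]
        rw [hre jj]
      rw [h1, Matrix.det_mul_column,
        ← Matrix.det_eval_matrixOfPolynomials_eq_det_vandermonde u r (fun i => hrd i)
          (fun i => hrm i),
        Matrix.det_vandermonde, mul_pow, ← my_sq_antisym n u, ← Finset.prod_pow]
      simp only [hu]
      ring
    have hterm : ∀ x : Fin n → {t : ℤ // t ∈ Finset.Icc a b},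
        (∏ i, w (x i)) *
          (∏ i : Fin n, ∏ j : Fin n, if i < j then
            (((x i : ℤ):ℝ) - m)^2 - (((x j : ℤ):ℝ) - m)^2 else 1)^2
          * (∏ i : Fin n, (((x i : ℤ):ℝ) - m)^2)
        = (∏ i, w (x i)) * (M x).det ^ 2 := by
      intro x; rw [hdet2 x]; ring
    rw [Finset.sum_congr rfl (fun x _ => hterm x)]
    have hdetexp : ∀ x : Fin n → {t : ℤ // t ∈ Finset.Icc a b},
        (M x).det = ∑ σ : Equiv.Perm (Fin n),
          ((Equiv.Perm.sign σ : ℤ):ℝ) * ∏ i : Fin n, (p (2*((σ i : Fin n):ℕ)+1)).eval ((x i : ℤ):ℝ) := by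
      intro x
      rw [← Matrix.det_transpose, Matrix.det_apply']
      apply Finset.sum_congr rfl
      intro σ _
      congr 1
    have hexpand : ∀ x : Fin n → {t : ℤ // t ∈ Finset.Icc a b},
        (∏ i, w (x i)) * (M x).det^2
        = ∑ σ : Equiv.Perm (Fin n), ∑ τ : Equiv.Perm (Fin n),
            ((Equiv.Perm.sign σ:ℤ):ℝ) * ((Equiv.Perm.sign τ:ℤ):ℝ) *
              ∏ i : Fin n, (w (x i) * (p (2*((σ i : Fin n):ℕ)+1)).eval ((x i:ℤ):ℝ)
                * (p (2*((τ i : Fin n):ℕ)+1)).eval ((x i:ℤ):ℝ)) := by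
      intro x
      rw [hdetexp x, sq, Finset.sum_mul_sum, Finset.mul_sum]
      apply Finset.sum_congr rfl; intro σ _
      rw [Finset.mul_sum]
      apply Finset.sum_congr rfl; intro τ _
      rw [Finset.prod_mul_distrib, Finset.prod_mul_distrib]
      ring
    rw [Finset.sum_congr rfl (fun x _ => hexpand x), Finset.sum_comm]
    rw [Finset.sum_congr rfl (fun σ _ => Finset.sum_comm)]
    have hinner : ∀ σ τ : Equiv.Perm (Fin n),
        (∑ x : Fin n → {t : ℤ // t ∈ Finset.Icc a b},
          ((Equiv.Perm.sign σ:ℤ):ℝ) * ((Equiv.Perm.sign τ:ℤ):ℝ) *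
            ∏ i : Fin n, (w (x i) * (p (2*((σ i : Fin n):ℕ)+1)).eval ((x i:ℤ):ℝ)
              * (p (2*((τ i : Fin n):ℕ)+1)).eval ((x i:ℤ):ℝ)))
        = ((Equiv.Perm.sign σ:ℤ):ℝ) * ((Equiv.Perm.sign τ:ℤ):ℝ) *
            ∏ i : Fin n, G ((σ i : Fin n):ℕ) ((τ i : Fin n):ℕ) := by
      intro σ τ
      rw [← Finset.mul_sum]
      congr 1
      have hpi := Finset.sum_prod_piFinset
        (Finset.univ : Finset {t : ℤ // t ∈ Finset.Icc a b})
        (fun (i : Fin n) (t : {t : ℤ // t ∈ Finset.Icc a b}) =>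
          w (t:ℤ) * (p (2*((σ i : Fin n):ℕ)+1)).eval ((t:ℤ):ℝ)
            * (p (2*((τ i : Fin n):ℕ)+1)).eval ((t:ℤ):ℝ))
      rw [Fintype.piFinset_univ] at hpi
      rw [hpi]
      apply Finset.prod_congr rfl
      intro i _
      rw [hG]
      exact Finset.sum_coe_sort (Finset.Icc a b)
        (fun t => w t * (p (2*((σ i : Fin n):ℕ)+1)).eval (t:ℝ)
          * (p (2*((τ i : Fin n):ℕ)+1)).eval (t:ℝ))
    rw [Finset.sum_congr rfl (fun σ _ => Finset.sum_congr rfl (fun τ _ => hinner σ τ))]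
    have hdiag : ∀ σ : Equiv.Perm (Fin n),
        (∑ τ : Equiv.Perm (Fin n),
          ((Equiv.Perm.sign σ:ℤ):ℝ) * ((Equiv.Perm.sign τ:ℤ):ℝ) *
            ∏ i : Fin n, G ((σ i : Fin n):ℕ) ((τ i : Fin n):ℕ))
        = ∏ i : Fin n, G (i:ℕ) (i:ℕ) := by
      intro σ
      rw [Finset.sum_eq_single σ]
      · have h1 : ∏ i : Fin n, G ((σ i : Fin n):ℕ) ((σ i : Fin n):ℕ)
            = ∏ i : Fin n, G (i:ℕ) (i:ℕ) := Equiv.prod_comp σ (fun i : Fin n => G (i:ℕ) (i:ℕ))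
        rw [h1]
        rcases Int.units_eq_one_or (Equiv.Perm.sign σ) with h | h <;> rw [h] <;> norm_num
      · intro τ _ hτ
        have hex : ∃ i : Fin n, σ i ≠ τ i := by
          by_contra hc
          push_neg at hc
          exact hτ (Equiv.ext fun i => (hc i).symm)
        obtain ⟨i, hi⟩ := hex
        rw [Finset.prod_eq_zero (Finset.mem_univ i)
          (hGoff _ _ (by exact fun hc => hi (Fin.val_injective hc))), mul_zero]
      · intro h; exact absurd (Finset.mem_univ σ) h
    rw [Finset.sum_congr rfl (fun σ _ => hdiag σ)]
    rw [Finset.sum_const, Finset.card_univ, Fintype.card_perm, Fintype.card_fin,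
      nsmul_eq_mul]
    congr 1
    rw [← Fin.prod_univ_eq_prod_range (fun j => ∑ t ∈ Finset.Icc a b,
      w t * (p (2*j+1)).eval (t:ℝ)^2) n]
    apply Finset.prod_congr rfl
    intro i _
    rw [hG]
    apply Finset.sum_congr rfl
    intro t _
    ring
  · -- degenerate case: both sides vanish
    push_neg at hcase
    have hprod0 : (∏ j ∈ Finset.range n,
        ∑ t ∈ Finset.Icc a b, w t * (p (2 * j + 1)).eval (t : ℝ) ^ 2) = 0 := by
      apply Finset.prod_eq_zero (i := n - 1) (by simp; omega)
      apply my_norm_zero a b w p hmonic hdeg horth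
      · omega
      · omega
    rw [hprod0, mul_zero]
    apply Finset.sum_eq_zero
    intro x _
    by_cases h0 : ∃ i : Fin n, ((x i : ℤ):ℝ) - m = 0
    · obtain ⟨i, hi⟩ := h0
      have h3 : (∏ i : Fin n, (((x i : ℤ):ℝ) - m)^2) = 0 :=
        Finset.prod_eq_zero (Finset.mem_univ i)
          (by rw [hi]; exact zero_pow two_ne_zero)
      rw [h3, mul_zero]
    by_cases h1 : ∃ i j : Fin n, i < j ∧ (((x i : ℤ):ℝ) - m)^2 = (((x j : ℤ):ℝ) - m)^2
    · obtain ⟨i, j, hij, he⟩ := h1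
      have h3 : (∏ i : Fin n, ∏ j : Fin n, if i < j then
          (((x i : ℤ):ℝ) - m)^2 - (((x j : ℤ):ℝ) - m)^2 else 1) = 0 :=
        Finset.prod_eq_zero (Finset.mem_univ i)
          (Finset.prod_eq_zero (Finset.mem_univ j) (by rw [if_pos hij, he, sub_self]))
      rw [h3, zero_pow two_ne_zero, mul_zero, zero_mul]
    · exfalso
      push_neg at h0 h1
      apply my_pigeon a b n hn (by omega) (fun i => (x i : ℤ)) (fun i => (x i).2)
      · intro i hc
        apply h0 i
        rw [hmdef]
        have : ((2 * (x i : ℤ) :ℤ):ℝ) = (((a + b : ℤ)):ℝ) := by rw [hc]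
        push_cast at this
        linarith
      · intro i j hij hc
        have h4 : (((2*(x i : ℤ) - a - b)^2 : ℤ):ℝ) = (((2*(x j : ℤ) - a - b)^2 : ℤ):ℝ) := by
          rw [hc]
        push_cast at h4
        have hui : (((x i : ℤ):ℝ) - m)^2 = (((x j : ℤ):ℝ) - m)^2 := by
          rw [hmdef]
          nlinarith [h4]
        rcases lt_or_gt_of_ne hij with h | h
        · exact h1 i j h hui
        · exact h1 j i h hui.symm
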